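/- Let S be a Polish space, d ∈ ℕ, and let μ = μ₁ ⊗ ⋯ ⊗ μ_d be a product probability measure on S^d. For any probability measure ν on S^d with ν ≪ μ and any nonempty B ⊆ {1,…,d}, the relative entropy satisfies the chain rule H(ν | μ) = H(ν^(B) | μ^(B)) + H(ν | ν^(B) ⊗ μ^(Bᶜ)), where ν^(B) denotes the marginal of ν on the coordinates in B and μ^(Bᶜ) the product of the μ_k for k ∉ B. -/

import Mathlib

open MeasureTheory ProbabilityTheory Real
open scoped ENNReal

-- Relative entropy (Kullback–Leibler divergence) with values in `EReal`.
open scoped Classical in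
noncomputable def KL {X : Type*} [MeasurableSpace X] (ν μ : Measure X) : EReal :=
  if ν ≪ μ ∧ Integrable (fun x => Real.log (ν.rnDeriv μ x).toReal) ν
  then ((∫ x, Real.log (ν.rnDeriv μ x).toReal ∂ν : ℝ) : EReal) else ⊤

/-- Marginal of a measure on `S^d` on the coordinates in `B`. -/
noncomputable def marg {S : Type*} [MeasurableSpace S] {d : ℕ}
    (ν : Measure (Fin d → S)) (B : Set (Fin d)) : Measure (B → S) :=
  ν.map (fun x (i : B) => x (i : Fin d))

/-- The identification `S^d ≅ S^B × S^{Bᶜ}`. -/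
def splitMap {S : Type*} {d : ℕ} (B : Set (Fin d)) :
    (Fin d → S) → ((B → S) × ((↥Bᶜ) → S)) :=
  fun x => (fun i => x (i : Fin d), fun i => x (i : Fin d))

section Aux

variable {X Y : Type*} [MeasurableSpace X] [MeasurableSpace Y]

lemma KL_ne_bot (ν μ : Measure X) : KL ν μ ≠ ⊥ := by
  unfold KL
  split_ifs
  · exact EReal.coe_ne_bot _
  · exact bot_lt_top.ne'

/-- KL is invariant under a measurable equivalence. -/
lemma KL_map_equiv (e : X ≃ᵐ Y) (ν μ : Measure X) [SigmaFinite ν] [SigmaFinite μ] :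
    KL (ν.map e) (μ.map e) = KL ν μ := by
  by_cases hac : ν ≪ μ
  · have hac' : ν.map e ≪ μ.map e := hac.map e.measurable
    have hre : (fun x => (ν.map e).rnDeriv (μ.map e) (e x)) =ᵐ[μ] ν.rnDeriv μ :=
      e.measurableEmbedding.rnDeriv_map ν μ
    have hreν : (fun x => (ν.map e).rnDeriv (μ.map e) (e x)) =ᵐ[ν] ν.rnDeriv μ :=
      hac.ae_le hre
    have hlog : (fun x => Real.log ((ν.map e).rnDeriv (μ.map e) (e x)).toReal)
        =ᵐ[ν] fun x => Real.log ((ν.rnDeriv μ) x).toReal := by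
      filter_upwards [hreν] with x hx using by rw [hx]
    have hmeas : StronglyMeasurable
        (fun y => Real.log ((ν.map e).rnDeriv (μ.map e) y).toReal) :=
      (Real.measurable_log.comp
        (Measure.measurable_rnDeriv _ _).ennreal_toReal).stronglyMeasurable
    have hint_iff : Integrable (fun y => Real.log ((ν.map e).rnDeriv (μ.map e) y).toReal)
        (ν.map e) ↔ Integrable (fun x => Real.log (ν.rnDeriv μ x).toReal) ν := by
      rw [integrable_map_measure hmeas.aestronglyMeasurable e.measurable.aemeasurable]
      exact integrable_congr hlog
    unfold KL
    by_cases hint : Integrable (fun x => Real.log (ν.rnDeriv μ x).toReal) ν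
    · rw [if_pos ⟨hac', hint_iff.mpr hint⟩, if_pos ⟨hac, hint⟩]
      congr 1
      rw [integral_map e.measurable.aemeasurable hmeas.aestronglyMeasurable]
      exact integral_congr_ae hlog
    · rw [if_neg, if_neg]
      · exact fun h => hint h.2
      · exact fun h => hint (hint_iff.mp h.2)
  · have hac' : ¬ ν.map e ≪ μ.map e := by
      intro h
      apply hac
      have := h.map e.symm.measurable
      rwa [Measure.map_map e.symm.measurable e.measurable,
        Measure.map_map e.symm.measurable e.measurable,
        show (⇑e.symm ∘ ⇑e) = id from funext fun x => e.symm_apply_apply x,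
        Measure.map_id, Measure.map_id] at this
    unfold KL
    rw [if_neg (fun h => hac' h.1), if_neg (fun h => hac h.1)]

/-- The negative part of the log-likelihood ratio is always integrable
(for probability measures with `ν ≪ ρ`). -/
lemma integrable_neg_part_llr (ν ρ : Measure X) [IsProbabilityMeasure ν]
    [IsProbabilityMeasure ρ] (hac : ν ≪ ρ) :
    Integrable (fun x => max (- Real.log (ν.rnDeriv ρ x).toReal) 0) ν := by
  have hmeas : Measurable fun x => max (- Real.log (ν.rnDeriv ρ x).toReal) 0 :=
    ((Real.measurable_log.comp (Measure.measurable_rnDeriv _ _).ennreal_toReal).neg).max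
      measurable_const
  refine ⟨hmeas.aestronglyMeasurable, ?_⟩
  have hiff := hasFiniteIntegral_iff_ofReal (μ := ν)
    (f := fun x => max (- Real.log (ν.rnDeriv ρ x).toReal) 0)
    (ae_of_all _ fun x => le_max_right _ _)
  rw [hiff]
  have hkey : ∫⁻ x, ENNReal.ofReal (max (- Real.log (ν.rnDeriv ρ x).toReal) 0) ∂ν
      = ∫⁻ x, ν.rnDeriv ρ x
          * ENNReal.ofReal (max (- Real.log (ν.rnDeriv ρ x).toReal) 0) ∂ρ :=
    (MeasureTheory.lintegral_rnDeriv_mul hac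
      (hmeas.ennreal_ofReal).aemeasurable).symm
  rw [hkey]
  have hbound : ∀ x, ν.rnDeriv ρ x
      * ENNReal.ofReal (max (- Real.log (ν.rnDeriv ρ x).toReal) 0) ≤ 1 := by
    intro x
    set r := ν.rnDeriv ρ x with hr
    by_cases htop : r = ⊤
    · simp [htop]
    · set t := r.toReal with ht
      have ht0 : 0 ≤ t := ENNReal.toReal_nonneg
      have hrt : r = ENNReal.ofReal t := by
        rw [ht, ENNReal.ofReal_toReal htop]
      rw [hrt, ← ENNReal.ofReal_mul ht0]
      refine ENNReal.ofReal_le_one.mpr ?_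
      rcases le_or_gt (- Real.log t) 0 with hneg | hpos
      · rw [max_eq_right hneg]
        simp
      · rw [max_eq_left hpos.le]
        rcases eq_or_lt_of_le ht0 with h0 | h0
        · simp [← h0]
        · have hlog : Real.log t⁻¹ ≤ t⁻¹ - 1 :=
            Real.log_le_sub_one_of_pos (inv_pos.mpr h0)
          rw [Real.log_inv] at hlog
          have : - Real.log t ≤ t⁻¹ := hlog.trans (by linarith [inv_pos.mpr h0])
          calc t * (- Real.log t) ≤ t * t⁻¹ := by
                exact mul_le_mul_of_nonneg_left this ht0
            _ = 1 := mul_inv_cancel₀ h0.ne'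
  calc ∫⁻ x, ν.rnDeriv ρ x
        * ENNReal.ofReal (max (- Real.log (ν.rnDeriv ρ x).toReal) 0) ∂ρ
      ≤ ∫⁻ _, 1 ∂ρ := lintegral_mono hbound
    _ = 1 := by simp
    _ < ⊤ := ENNReal.one_lt_top

/-- If two functions have integrable negative parts, their sum is integrable iff both are. -/
lemma integrable_add_iff_of_neg_parts {Z : Type*} [MeasurableSpace Z] (μ : Measure Z)
    {f₁ f₂ : Z → ℝ} (h1m : AEStronglyMeasurable f₁ μ) (h2m : AEStronglyMeasurable f₂ μ)
    (h1 : Integrable (fun x => max (-f₁ x) 0) μ) (h2 : Integrable (fun x => max (-f₂ x) 0) μ) :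
    Integrable (fun x => f₁ x + f₂ x) μ ↔ Integrable f₁ μ ∧ Integrable f₂ μ := by
  constructor
  · intro h
    have key : ∀ (g₁ g₂ : Z → ℝ), AEStronglyMeasurable g₁ μ →
        Integrable (fun x => max (-g₁ x) 0) μ → Integrable (fun x => max (-g₂ x) 0) μ →
        Integrable (fun x => g₁ x + g₂ x) μ → Integrable g₁ μ := by
      intro g₁ g₂ hg₁m hg₁ hg₂ hsum
      refine Integrable.mono' ((hsum.abs.add hg₂).add hg₁) hg₁m (ae_of_all _ fun x => ?_)
      simp only [Pi.add_apply]
      have hx1 : - g₁ x ≤ max (-g₁ x) 0 := le_max_left _ _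
      have hx2 : - g₂ x ≤ max (-g₂ x) 0 := le_max_left _ _
      have hx3 : (0:ℝ) ≤ max (-g₁ x) 0 := le_max_right _ _
      have hx4 : (0:ℝ) ≤ max (-g₂ x) 0 := le_max_right _ _
      have hx5 : g₁ x + g₂ x ≤ |g₁ x + g₂ x| := le_abs_self _
      have hx6 : (0:ℝ) ≤ |g₁ x + g₂ x| := abs_nonneg _
      rw [Real.norm_eq_abs, abs_le]
      constructor
      · linarith
      · linarith
    refine ⟨key f₁ f₂ h1m h1 h2 h, key f₂ f₁ h2m h2 h1 ?_⟩
    exact h.congr (ae_of_all _ fun x => by ring)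
  · rintro ⟨hf₁, hf₂⟩
    exact hf₁.add hf₂

variable (α : Measure X) (β : Measure Y) [IsProbabilityMeasure α] [IsProbabilityMeasure β]
variable (ν : Measure (X × Y)) [IsProbabilityMeasure ν]

/-- A product with a `withDensity` first factor. -/
lemma fst_prod_eq_withDensity (hac : ν ≪ α.prod β) :
    (ν.map Prod.fst).prod β
      = (α.prod β).withDensity (fun p => (ν.map Prod.fst).rnDeriv α p.1) := by
  haveI : IsProbabilityMeasure (ν.map Prod.fst) :=
    Measure.isProbabilityMeasure_map measurable_fst.aemeasurable
  have hfst : ν.map Prod.fst ≪ α := by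
    have h := hac.map measurable_fst
    rwa [show (α.prod β).map Prod.fst = α from Measure.fst_prod] at h
  set g : X → ℝ≥0∞ := (ν.map Prod.fst).rnDeriv α with hg
  have hgm : Measurable g := Measure.measurable_rnDeriv _ _
  refine Measure.prod_eq fun s t hs ht => ?_
  rw [withDensity_apply _ (hs.prod ht), ← Measure.prod_restrict s t]
  rw [MeasureTheory.lintegral_prod (fun a : X × Y => g a.1)
    ((hgm.comp measurable_fst).aemeasurable)]
  have : ∀ x, ∫⁻ _, g x ∂(β.restrict t) = g x * β t := fun x => by
    rw [lintegral_const, Measure.restrict_apply_univ]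
  simp_rw [this]
  rw [lintegral_mul_const _ hgm, Measure.setLIntegral_rnDeriv hfst]

/-- The chain rule for KL on a product space, abstract version. -/
lemma KL_chain (hac : ν ≪ α.prod β) :
    KL ν (α.prod β) = KL (ν.map Prod.fst) α + KL ν ((ν.map Prod.fst).prod β) := by
  haveI : IsProbabilityMeasure (ν.map Prod.fst) :=
    Measure.isProbabilityMeasure_map measurable_fst.aemeasurable
  have hfst : ν.map Prod.fst ≪ α := by
    have h := hac.map measurable_fst
    rwa [show (α.prod β).map Prod.fst = α from Measure.fst_prod] at h
  set g : X → ℝ≥0∞ := (ν.map Prod.fst).rnDeriv α with hg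
  have hgm : Measurable g := Measure.measurable_rnDeriv _ _
  have key := fst_prod_eq_withDensity α β ν hac
  -- ν ≪ (ν.map fst).prod β
  have hzero : ν {p : X × Y | g p.1 = 0} = 0 := by
    have hsm : MeasurableSet {x : X | g x = 0} := hgm (measurableSet_singleton 0)
    have h1 : ν {p : X × Y | g p.1 = 0} = (ν.map Prod.fst) {x | g x = 0} := by
      rw [Measure.map_apply measurable_fst hsm]; rfl
    rw [h1, ← Measure.setLIntegral_rnDeriv hfst, ← hg]
    rw [setLIntegral_congr_fun hsm (fun x hx => hx)]
    simp
  have hac2 : ν ≪ (ν.map Prod.fst).prod β := by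
    rw [key]
    refine Measure.AbsolutelyContinuous.mk fun s hs h0 => ?_
    rw [withDensity_apply _ hs] at h0
    have hae : (fun p => g p.1) =ᵐ[(α.prod β).restrict s] 0 :=
      (lintegral_eq_zero_iff (hgm.comp measurable_fst)).mp h0
    have hne : MeasurableSet {p : X × Y | g p.1 ≠ 0} :=
      ((hgm.comp measurable_fst) (measurableSet_singleton 0)).compl
    have h2 : (α.prod β) ({p : X × Y | g p.1 ≠ 0} ∩ s) = 0 := by
      have h : ((α.prod β).restrict s)
          {a : X × Y | ¬ (fun p => g p.1) a = (0 : (X × Y) → ℝ≥0∞) a} = 0 := ae_iff.mp hae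
      have hseteq : {a : X × Y | ¬ (fun p => g p.1) a = (0 : (X × Y) → ℝ≥0∞) a}
          = {p : X × Y | g p.1 ≠ 0} := by ext p; simp
      rw [hseteq, Measure.restrict_apply hne] at h
      exact h
    have h3 : ν ({p : X × Y | g p.1 ≠ 0} ∩ s) = 0 := hac h2
    have hsub : s ⊆ {p : X × Y | g p.1 = 0} ∪ ({p : X × Y | g p.1 ≠ 0} ∩ s) := by
      intro p hp
      by_cases hgp : g p.1 = 0
      · exact Or.inl hgp
      · exact Or.inr ⟨hgp, hp⟩
    refine le_antisymm ?_ zero_le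
    calc ν s ≤ ν ({p : X × Y | g p.1 = 0} ∪ ({p : X × Y | g p.1 ≠ 0} ∩ s)) :=
          measure_mono hsub
      _ ≤ ν {p : X × Y | g p.1 = 0} + ν ({p : X × Y | g p.1 ≠ 0} ∩ s) := measure_union_le _ _
      _ = 0 := by rw [hzero, h3, add_zero]
  set k : X × Y → ℝ≥0∞ := ν.rnDeriv ((ν.map Prod.fst).prod β) with hk
  have hkm : Measurable k := Measure.measurable_rnDeriv _ _
  -- factorization of ν as a density against α.prod β
  have hfac : ν = (α.prod β).withDensity ((fun p => g p.1) * k) := by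
    rw [withDensity_mul _ (show Measurable fun p : X × Y => g p.1 from hgm.comp measurable_fst)
      hkm, ← key,
      Measure.withDensity_rnDeriv_eq _ _ hac2]
  have hrn : ν.rnDeriv (α.prod β) =ᵐ[α.prod β] (fun p => g p.1) * k := by
    conv_lhs => rw [hfac]
    exact Measure.rnDeriv_withDensity _ ((hgm.comp measurable_fst).mul hkm)
  have hrnν : ν.rnDeriv (α.prod β) =ᵐ[ν] (fun p => g p.1) * k := hac.ae_le hrn
  -- a.e. positivity and finiteness
  have hgpos : ∀ᵐ p ∂ν, 0 < g p.1 := by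
    have h1 : ∀ᵐ x ∂(ν.map Prod.fst), 0 < g x := Measure.rnDeriv_pos hfst
    have hms : MeasurableSet {x : X | 0 < g x} := measurableSet_lt measurable_const hgm
    exact (ae_map_iff measurable_fst.aemeasurable hms).mp h1
  have hgtop : ∀ᵐ p ∂ν, g p.1 < ⊤ := by
    have h1 : ∀ᵐ x ∂(ν.map Prod.fst), g x < ⊤ := hfst.ae_le (Measure.rnDeriv_lt_top _ _)
    have hms : MeasurableSet {x : X | g x < ⊤} := measurableSet_lt hgm measurable_const
    exact (ae_map_iff measurable_fst.aemeasurable hms).mp h1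
  have hkpos : ∀ᵐ p ∂ν, 0 < k p := Measure.rnDeriv_pos hac2
  have hktop : ∀ᵐ p ∂ν, k p < ⊤ := hac2.ae_le (Measure.rnDeriv_lt_top _ _)
  -- the log decomposition
  have hlog : (fun p => Real.log (ν.rnDeriv (α.prod β) p).toReal)
      =ᵐ[ν] fun p => Real.log (g p.1).toReal + Real.log (k p).toReal := by
    filter_upwards [hrnν, hgpos, hgtop, hkpos, hktop] with p h1 h2 h3 h4 h5
    have hg0 : (g p.1).toReal ≠ 0 := (ENNReal.toReal_pos h2.ne' h3.ne).ne'
    have hk0 : (k p).toReal ≠ 0 := (ENNReal.toReal_pos h4.ne' h5.ne).ne'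
    rw [h1, Pi.mul_apply, ENNReal.toReal_mul, Real.log_mul hg0 hk0]
  -- transferring the marginal integrand
  set f₁ : X × Y → ℝ := fun p => Real.log (g p.1).toReal with hf₁
  set f₂ : X × Y → ℝ := fun p => Real.log (k p).toReal with hf₂
  have hf₁m : Measurable f₁ := show Measurable fun p : X × Y => Real.log (g p.1).toReal from
    (Real.measurable_log.comp hgm.ennreal_toReal).comp measurable_fst
  have hf₂m : Measurable f₂ := show Measurable fun p : X × Y => Real.log (k p).toReal from
    Real.measurable_log.comp hkm.ennreal_toReal
  have hmargmeas : StronglyMeasurable (fun x => Real.log (g x).toReal) :=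
    (show Measurable fun x : X => Real.log (g x).toReal from
      Real.measurable_log.comp hgm.ennreal_toReal).stronglyMeasurable
  have hint1_iff : Integrable (fun x => Real.log (g x).toReal) (ν.map Prod.fst)
      ↔ Integrable f₁ ν := by
    rw [integrable_map_measure hmargmeas.aestronglyMeasurable measurable_fst.aemeasurable]
    rfl
  -- negative parts are integrable
  have hneg1 : Integrable (fun p => max (- f₁ p) 0) ν := by
    have h := integrable_neg_part_llr (ν.map Prod.fst) α hfst
    have hm : AEStronglyMeasurable (fun x : X => max (- Real.log (g x).toReal) 0)
        (ν.map Prod.fst) :=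
      ((show Measurable fun x : X => Real.log (g x).toReal from
        Real.measurable_log.comp hgm.ennreal_toReal).neg.max
          measurable_const).aestronglyMeasurable
    exact (integrable_map_measure hm measurable_fst.aemeasurable).mp h
  have hneg2 : Integrable (fun p => max (- f₂ p) 0) ν :=
    integrable_neg_part_llr ν ((ν.map Prod.fst).prod β) hac2
  have hsplit : Integrable (fun p => f₁ p + f₂ p) ν ↔ Integrable f₁ ν ∧ Integrable f₂ ν :=
    integrable_add_iff_of_neg_parts ν hf₁m.aestronglyMeasurable hf₂m.aestronglyMeasurable
      hneg1 hneg2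
  have hint_iff : Integrable (fun p => Real.log (ν.rnDeriv (α.prod β) p).toReal) ν
      ↔ Integrable f₁ ν ∧ Integrable f₂ ν := by
    rw [integrable_congr hlog]
    exact hsplit
  unfold KL
  by_cases h1 : Integrable f₁ ν
  · by_cases h2 : Integrable f₂ ν
    · rw [if_pos ⟨hac, hint_iff.mpr ⟨h1, h2⟩⟩, if_pos ⟨hfst, hint1_iff.mpr h1⟩,
        if_pos ⟨hac2, h2⟩]
      rw [← EReal.coe_add]
      congr 1
      rw [integral_congr_ae hlog, integral_add h1 h2]
      congr 1
      rw [integral_map measurable_fst.aemeasurable hmargmeas.aestronglyMeasurable]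
    · rw [if_neg (fun h => h2 ((hint_iff.mp h.2).2)),
        if_neg (show ¬(ν ≪ (ν.map Prod.fst).prod β ∧
          Integrable (fun x => Real.log (ν.rnDeriv ((ν.map Prod.fst).prod β) x).toReal) ν)
          from fun h => h2 h.2)]
      refine (EReal.add_top_of_ne_bot ?_).symm
      split_ifs
      · exact EReal.coe_ne_bot _
      · exact bot_lt_top.ne'
  · rw [if_neg (fun h => h1 ((hint_iff.mp h.2).1)),
      if_neg (fun h => h1 (hint1_iff.mp h.2))]
    exact (EReal.top_add_of_ne_bot (KL_ne_bot _ _)).symm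

end Aux

/-- Chain rule for relative entropy:
`H(ν|μ) = H(ν^(B)|μ^(B)) + H(ν | ν^(B) ⊗ μ^(Bᶜ))` for a product reference measure `μ`. -/
theorem relativeEntropy_chain_rule
    {S : Type*} [MeasurableSpace S] [TopologicalSpace S] [PolishSpace S] [BorelSpace S]
    {d : ℕ} (μs : Fin d → Measure S) [∀ i, IsProbabilityMeasure (μs i)]
    (ν : Measure (Fin d → S)) [IsProbabilityMeasure ν]
    (hac : ν ≪ Measure.pi μs)
    (B : Set (Fin d)) (hB : B.Nonempty) :
    KL ν (Measure.pi μs)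
      = KL (marg ν B) (marg (Measure.pi μs) B)
        + KL (ν.map (splitMap B)) ((marg ν B).prod (marg (Measure.pi μs) Bᶜ)) := by
  classical
  set μ := Measure.pi μs with hμ
  set e : (Fin d → S) ≃ᵐ ((B → S) × ((↥Bᶜ) → S)) :=
    MeasurableEquiv.piEquivPiSubtypeProd (fun _ : Fin d => S) (· ∈ B) with he
  have hsplit_eq : splitMap B = ⇑e := rfl
  have hμe : μ.map e = (Measure.pi fun i : B => μs i).prod (Measure.pi fun i : ↥Bᶜ => μs i) :=
    (measurePreserving_piEquivPiSubtypeProd μs (· ∈ B)).map_eq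
  haveI : IsProbabilityMeasure (Measure.pi fun i : B => μs i) := by infer_instance
  haveI : IsProbabilityMeasure (Measure.pi fun i : ↥Bᶜ => μs i) := by infer_instance
  have hmargB : marg μ B = Measure.pi fun i : B => μs i := by
    have : marg μ B = (μ.map e).map Prod.fst := by
      rw [Measure.map_map measurable_fst e.measurable]
      rfl
    rw [this, hμe, show ((Measure.pi fun i : B => μs i).prod
      (Measure.pi fun i : ↥Bᶜ => μs i)).map Prod.fst = _ from Measure.fst_prod]
  have hmargBc : marg μ Bᶜ = Measure.pi fun i : ↥Bᶜ => μs i := by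
    have : marg μ Bᶜ = (μ.map e).map Prod.snd := by
      rw [Measure.map_map measurable_snd e.measurable]
      rfl
    rw [this, hμe, show ((Measure.pi fun i : B => μs i).prod
      (Measure.pi fun i : ↥Bᶜ => μs i)).map Prod.snd = _ from Measure.snd_prod]
  have hprodeq : μ.map e = (marg μ B).prod (marg μ Bᶜ) := by
    rw [hμe, hmargB, hmargBc]
  haveI : IsProbabilityMeasure (marg μ B) := by rw [hmargB]; infer_instance
  haveI : IsProbabilityMeasure (marg μ Bᶜ) := by rw [hmargBc]; infer_instance
  have hmargν : marg ν B = (ν.map e).map Prod.fst := by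
    rw [Measure.map_map measurable_fst e.measurable]
    rfl
  haveI : IsProbabilityMeasure (ν.map e) :=
    Measure.isProbabilityMeasure_map e.measurable.aemeasurable
  have hacmap : ν.map e ≪ (marg μ B).prod (marg μ Bᶜ) := by
    rw [← hprodeq]
    exact hac.map e.measurable
  calc KL ν μ = KL (ν.map e) (μ.map e) := (KL_map_equiv e ν μ).symm
    _ = KL (ν.map e) ((marg μ B).prod (marg μ Bᶜ)) := by rw [hprodeq]
    _ = KL ((ν.map e).map Prod.fst) (marg μ B)
        + KL (ν.map e) (((ν.map e).map Prod.fst).prod (marg μ Bᶜ)) :=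
      KL_chain (marg μ B) (marg μ Bᶜ) (ν.map e) hacmap
    _ = KL (marg ν B) (marg μ B)
        + KL (ν.map (splitMap B)) ((marg ν B).prod (marg μ Bᶜ)) := by
      rw [← hmargν, hsplit_eq]
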